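/- arXiv:2008.06469 — 3 statements merged into one kernel-verified Lean document; each statement's English description precedes it below -/
import Mathlib

section
/- Let B_E be the set of partitions β_1 ≤ β_2 ≤ … ≤ β_n into positive parts such that β_1 ∈ {2, 3} and for 2 ≤ i ≤ n: if β_i is odd then 3 ≤ β_i − β_{i−1} ≤ 4, and if β_i is even then 0 ≤ β_i − β_{i−1} ≤ 1. Then for all integers n ≥ 2 and h ≥ 1, the polynomial ∑ q^{β_1 + … + β_n}, summed over all partitions in B_E with exactly n parts and largest part equal to 4h + 1, equals q^{2n + 2h² + h} · [n−2 choose h−1]_{q⁴}. -/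
open Finset PowerSeries

/-- `(q^j; q^j)_n = ∏_{i=0}^{n-1} (1 - q^{j(i+1)})` as a power series in `q`. -/
noncomputable def qPoch (j n : ℕ) : PowerSeries ℚ :=
  ∏ i ∈ Finset.range n, (1 - (PowerSeries.X : PowerSeries ℚ) ^ (j * (i + 1)))

/-- The Gaussian binomial coefficient `[A choose B]_{q^j}`, i.e.
`(q^j;q^j)_A / ((q^j;q^j)_B (q^j;q^j)_{A-B})` for `B ≤ A` and `0` otherwise. -/
noncomputable def gaussBinom (j A B : ℕ) : PowerSeries ℚ :=
  if B ≤ A then qPoch j A * (qPoch j B)⁻¹ * (qPoch j (A - B))⁻¹ else 0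

noncomputable def Gg (m b : ℕ) : PowerSeries ℚ :=
  ∑ S ∈ (Finset.range m).powersetCard b,
    (PowerSeries.X : PowerSeries ℚ) ^ (4 * ∑ k ∈ S, (k + 1))

lemma qPoch_zero (j : ℕ) : qPoch j 0 = 1 := by simp [qPoch]

lemma qPoch_succ (j n : ℕ) :
    qPoch j (n + 1) = qPoch j n * (1 - (PowerSeries.X : PowerSeries ℚ) ^ (j * (n + 1))) := by
  simp [qPoch, Finset.prod_range_succ]

lemma qPoch_constCoeff (j n : ℕ) (hj : 0 < j) :
    PowerSeries.constantCoeff (qPoch j n) = 1 := by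
  induction n with
  | zero => simp [qPoch]
  | succ n ih =>
      rw [qPoch_succ, map_mul, ih, map_sub, map_one, map_pow, PowerSeries.constantCoeff_X]
      have : j * (n + 1) ≠ 0 := by positivity
      simp [zero_pow this]

lemma qPoch_mul_inv (j n : ℕ) (hj : 0 < j) : qPoch j n * (qPoch j n)⁻¹ = 1 := by
  exact PowerSeries.mul_inv_cancel _ (by rw [qPoch_constCoeff j n hj]; norm_num)

lemma Gg_zero_right (m : ℕ) : Gg m 0 = 1 := by simp [Gg]

lemma Gg_eq_zero (m b : ℕ) (h : m < b) : Gg m b = 0 := by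
  rw [Gg, Finset.powersetCard_eq_empty.2 (by simpa using h), Finset.sum_empty]

lemma Gg_succ (m b : ℕ) :
    Gg (m + 1) (b + 1) = Gg m (b + 1) + (PowerSeries.X : PowerSeries ℚ) ^ (4 * (m + 1)) * Gg m b := by
  have hins : Finset.range (m + 1) = insert m (Finset.range m) := by
    rw [Finset.range_add_one]
  rw [Gg, hins, Finset.powersetCard_succ_insert (by simp)]
  rw [Finset.sum_union, Finset.sum_image]
  · congr 1
    rw [Gg, Finset.mul_sum]
    apply Finset.sum_congr rfl
    intro S hS
    have hm : m ∉ S := fun hc => by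
      simp only [Finset.mem_powersetCard] at hS
      have := hS.1 hc
      simp at this
    rw [Finset.sum_insert hm, ← pow_add]
    congr 1
    ring
  · intro S hS T hT hST
    simp only [Finset.mem_coe, Finset.mem_powersetCard] at hS hT
    have hmS : m ∉ S := fun hc => by have := hS.1 hc; simp at this
    have hmT : m ∉ T := fun hc => by have := hT.1 hc; simp at this
    ext x
    constructor
    · intro hx
      have : x ∈ insert m T := hST ▸ Finset.mem_insert_of_mem hx
      rcases Finset.mem_insert.1 this with h | h
      · exact absurd (h ▸ hx) hmS
      · exact h
    · intro hx
      have : x ∈ insert m S := hST.symm ▸ Finset.mem_insert_of_mem hx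
      rcases Finset.mem_insert.1 this with h | h
      · exact absurd (h ▸ hx) hmT
      · exact h
  · rw [Finset.disjoint_left]
    intro S hS hS'
    simp only [Finset.mem_powersetCard] at hS
    obtain ⟨T, hT, rfl⟩ := Finset.mem_image.1 hS'
    simp only [Finset.mem_powersetCard] at hT
    have : m ∈ insert m T := Finset.mem_insert_self m T
    have := hS.1 this
    simp at this

lemma Gg_self (m : ℕ) :
    Gg m m = (PowerSeries.X : PowerSeries ℚ) ^ (2 * (m * (m + 1))) := by
  have hps := Finset.powersetCard_self (Finset.range m)
  rw [Finset.card_range] at hps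
  rw [Gg, hps, Finset.sum_singleton]
  congr 1
  have h1 : ∑ k ∈ Finset.range m, (k + 1) = ∑ i ∈ Finset.range (m + 1), i := by
    simpa using (Finset.sum_range_succ' (fun i => i) m).symm
  rw [h1]
  have h2' : (∑ i ∈ Finset.range (m + 1), i) * 2 = (m + 1) * m := by
    simpa using Finset.sum_range_id_mul_two (m + 1)
  calc 4 * ∑ i ∈ Finset.range (m + 1), i
      = 2 * ((∑ i ∈ Finset.range (m + 1), i) * 2) := by ring
    _ = 2 * ((m + 1) * m) := by rw [h2']
    _ = 2 * (m * (m + 1)) := by ring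

lemma Gg_qPoch : ∀ m : ℕ, ∀ b ≤ m, Gg m b * qPoch 4 b * qPoch 4 (m - b) =
    (PowerSeries.X : PowerSeries ℚ) ^ (2 * (b * (b + 1))) * qPoch 4 m := by
  intro m
  induction m with
  | zero =>
      intro b hb
      interval_cases b
      simp [Gg_zero_right, qPoch_zero]
  | succ m ih =>
      intro b hb
      match b with
      | 0 => simp [Gg_zero_right, qPoch_zero]
      | b' + 1 =>
        rcases Nat.lt_or_ge m (b' + 1) with hlt | hge
        · -- b' = m
          have hb' : b' = m := by omega
          subst hb'
          have hz : Gg b' (b' + 1) = 0 := by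
            rw [Gg, Finset.powersetCard_eq_empty.2 (by simp), Finset.sum_empty]
          rw [Gg_succ, hz, zero_add, Nat.sub_self, qPoch_zero, Gg_self, mul_one,
            qPoch_succ,
            show 2 * ((b' + 1) * (b' + 1 + 1)) = 4 * (b' + 1) + 2 * (b' * (b' + 1)) by ring,
            pow_add]
        · -- b' + 1 ≤ m
          obtain ⟨c, rfl⟩ : ∃ c, m = b' + 1 + c := ⟨m - (b' + 1), by omega⟩
          have IH1 := ih (b' + 1) (by omega)
          have IH2 := ih b' (by omega)
          have e1 : b' + 1 + c - (b' + 1) = c := by omega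
          have e2 : b' + 1 + c - b' = c + 1 := by omega
          have e3 : b' + 1 + c + 1 - (b' + 1) = c + 1 := by omega
          rw [e1] at IH1
          rw [e2, qPoch_succ 4 c] at IH2
          rw [Gg_succ, e3, qPoch_succ 4 c, qPoch_succ 4 (b' + 1 + c),
            qPoch_succ 4 b'] at *
          linear_combination (1 - (PowerSeries.X : PowerSeries ℚ) ^ (4 * (c + 1))) * IH1 +
            (PowerSeries.X : PowerSeries ℚ) ^ (4 * (b' + 1 + c + 1)) *
              (1 - (PowerSeries.X : PowerSeries ℚ) ^ (4 * (b' + 1))) * IH2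

def bE (T : Finset ℕ) (i : ℕ) : ℕ :=
  2 + 4 * (T.filter (· < i)).card + 3 * (if i ∈ T then 1 else 0)

lemma card_filter_lt_succ (T : Finset ℕ) (i : ℕ) :
    (T.filter (· < i + 1)).card = (T.filter (· < i)).card + (if i ∈ T then 1 else 0) := by
  by_cases hi : i ∈ T
  · rw [if_pos hi]
    have h : T.filter (· < i + 1) = insert i (T.filter (· < i)) := by
      ext k
      simp only [Finset.mem_insert, Finset.mem_filter]
      constructor
      · rintro ⟨hk, hlt⟩
        rcases Nat.lt_or_ge k i with h' | h'
        · exact Or.inr ⟨hk, h'⟩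
        · exact Or.inl (by omega)
      · rintro (rfl | ⟨hk, hlt⟩)
        · exact ⟨hi, by omega⟩
        · exact ⟨hk, by omega⟩
    rw [h, Finset.card_insert_of_notMem (by simp)]
  · rw [if_neg hi, add_zero]
    congr 1
    ext k
    simp only [Finset.mem_filter]
    constructor
    · rintro ⟨hk, hlt⟩
      refine ⟨hk, ?_⟩
      rcases Nat.lt_or_ge k i with h' | h'
      · exact h'
      · exact absurd (by omega : k = i) (fun he => hi (he ▸ hk))
    · rintro ⟨hk, hlt⟩
      exact ⟨hk, by omega⟩

lemma bE_succ (T : Finset ℕ) (i : ℕ) :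
    bE T (i + 1) = bE T i + (if i ∈ T then 1 else 0) + 3 * (if i + 1 ∈ T then 1 else 0) := by
  unfold bE
  rw [card_filter_lt_succ]
  by_cases h1 : i ∈ T <;> by_cases h2 : i + 1 ∈ T <;> simp [h1, h2] <;> ring

lemma bE_zero (T : Finset ℕ) : bE T 0 = 2 + 3 * (if 0 ∈ T then 1 else 0) := by
  simp [bE]

lemma odd_bE (T : Finset ℕ) (i : ℕ) : Odd (bE T i) ↔ i ∈ T := by
  unfold bE
  by_cases h : i ∈ T <;> simp [h, Nat.odd_iff] <;> omega

lemma bE_pos (T : Finset ℕ) (i : ℕ) : 0 < bE T i := by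
  unfold bE; omega

lemma bE_mono (T : Finset ℕ) : Monotone (bE T) := by
  apply monotone_nat_of_le_succ
  intro i
  rw [bE_succ]
  by_cases h1 : i ∈ T <;> by_cases h2 : i + 1 ∈ T <;> simp [h1, h2] <;> omega

lemma sum_bE (n : ℕ) (T : Finset ℕ) (hT : T ⊆ Finset.range n) :
    ∑ i ∈ Finset.range n, bE T i = 2 * n + 3 * T.card + 4 * ∑ k ∈ T, (n - 1 - k) := by
  unfold bE
  rw [Finset.sum_add_distrib, Finset.sum_add_distrib]
  have h1 : ∑ _i ∈ Finset.range n, 2 = 2 * n := by simp [mul_comm]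
  have h2 : ∑ i ∈ Finset.range n, 3 * (if i ∈ T then 1 else 0) = 3 * T.card := by
    rw [← Finset.mul_sum]
    congr 1
    rw [Finset.sum_ite_mem]
    rw [Finset.inter_eq_right.2 hT]
    simp
  have h3 : ∑ i ∈ Finset.range n, 4 * (T.filter (· < i)).card
      = 4 * ∑ k ∈ T, (n - 1 - k) := by
    rw [← Finset.mul_sum]
    congr 1
    have : ∀ i, (T.filter (· < i)).card = ∑ k ∈ T, if k < i then 1 else 0 := by
      intro i; rw [Finset.card_filter]
    simp_rw [this]
    rw [Finset.sum_comm]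
    apply Finset.sum_congr rfl
    intro k hk
    have hkn : k < n := Finset.mem_range.1 (hT hk)
    have : ∑ i ∈ Finset.range n, (if k < i then 1 else 0)
        = ((Finset.range n).filter (fun i => k < i)).card := by
      rw [Finset.card_filter]
    rw [this]
    have : (Finset.range n).filter (fun i => k < i) = Finset.Ico (k + 1) n := by
      ext x; simp only [Finset.mem_filter, Finset.mem_range, Finset.mem_Ico]; omega
    rw [this, Nat.card_Ico]
    omega
  omega

def Lf (T : Finset ℕ) (n : ℕ) : List ℕ := (List.range n).map (bE T)

lemma Lf_length (T : Finset ℕ) (n : ℕ) : (Lf T n).length = n := by simp [Lf]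

lemma Lf_getElem (T : Finset ℕ) (n i : ℕ) (h : i < n) :
    (Lf T n)[i]'(by simp [Lf_length, h]) = bE T i := by
  simp [Lf]

lemma Lf_head (T : Finset ℕ) (n : ℕ) (hn : 1 ≤ n) : (Lf T n).head? = some (bE T 0) := by
  obtain ⟨m, rfl⟩ : ∃ m, n = m + 1 := ⟨n - 1, by omega⟩
  rw [Lf, List.range_succ_eq_map]
  simp

lemma Lf_getLast (T : Finset ℕ) (n : ℕ) (hn : 1 ≤ n) : (Lf T n).getLast? = some (bE T (n - 1)) := by
  rw [List.getLast?_eq_getElem?, Lf_length]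
  rw [List.getElem?_eq_getElem (by simp [Lf_length]; omega)]
  rw [Lf_getElem T n (n-1) (by omega)]

lemma Lf_sorted (T : Finset ℕ) (n : ℕ) : (Lf T n).Pairwise (· ≤ ·) := by
  apply List.Pairwise.map
  · intro a b hab
    exact bE_mono T (le_of_lt hab)
  · exact List.pairwise_lt_range (n := n)

lemma Lf_chain (T : Finset ℕ) (n : ℕ) :
    (Lf T n).Chain' (fun a b =>
      (Odd b → a + 3 ≤ b ∧ b ≤ a + 4) ∧ (Even b → a ≤ b ∧ b ≤ a + 1)) := by
  rw [Lf, List.Chain', List.isChain_map]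
  match n with
  | 0 => simp
  | n + 1 =>
    rw [List.isChain_range_succ]
    intro i hi
    have hs := bE_succ T i
    constructor
    · intro hodd
      have h2 : i + 1 ∈ T := (odd_bE T (i + 1)).1 hodd
      simp only [Nat.succ_eq_add_one] at hs ⊢
      by_cases h1 : i ∈ T <;> simp [h1, h2] at hs <;> omega
    · intro heven
      have h2 : i + 1 ∉ T := fun hm =>
        (Nat.not_even_iff_odd.2 ((odd_bE T (i + 1)).2 hm)) heven
      simp only [Nat.succ_eq_add_one] at hs ⊢
      by_cases h1 : i ∈ T <;> simp [h1, h2] at hs <;> omega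

lemma list_range_map_sum (f : ℕ → ℕ) (n : ℕ) :
    ((List.range n).map f).sum = ∑ i ∈ Finset.range n, f i := by
  induction n with
  | zero => simp
  | succ n ih =>
      rw [List.range_succ, Finset.sum_range_succ, List.map_append, List.sum_append, ih]
      simp

lemma Lf_sum (T : Finset ℕ) (n : ℕ) : (Lf T n).sum = ∑ i ∈ Finset.range n, bE T i :=
  list_range_map_sum (bE T) n

lemma backward (n h : ℕ) (hn : 2 ≤ n) (hh : 1 ≤ h) (l : List ℕ)
    (hhead : ∀ x, l.head? = some x → x = 2 ∨ x = 3)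
    (hchain : l.Chain' (fun a b =>
      (Odd b → a + 3 ≤ b ∧ b ≤ a + 4) ∧ (Even b → a ≤ b ∧ b ≤ a + 1)))
    (hlen : l.length = n) (hlast : l.getLast? = some (4 * h + 1)) :
    ∃ T : Finset ℕ, T ⊆ Finset.range n ∧ 0 ∉ T ∧ n - 1 ∈ T ∧ T.card = h ∧ l = Lf T n := by
  have hlen' : ∀ i, i < n → i < l.length := fun i hi => by omega
  set T : Finset ℕ := (Finset.range n).filter (fun i => Odd (l.getD i 0)) with hTdef
  have hmemT : ∀ i (hi : i < n), (i ∈ T ↔ Odd (l[i]'(hlen' i hi))) := by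
    intro i hi
    rw [hTdef, Finset.mem_filter, Finset.mem_range,
      List.getD_eq_getElem l 0 (hlen' i hi)]
    tauto
  have hstep : ∀ i (hi : i + 1 < n),
      l[i + 1]'(hlen' _ hi) = l[i]'(hlen' i (by omega)) + (if i ∈ T then 1 else 0)
        + 3 * (if i + 1 ∈ T then 1 else 0) := by
    intro i hi
    rw [List.Chain', List.isChain_iff_getElem] at hchain
    have hc := hchain i (by omega)
    have hT1 := hmemT i (by omega)
    have hT2 := hmemT (i + 1) hi
    rcases Nat.even_or_odd (l[i + 1]'(hlen' _ hi)) with hev | hod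
    · have h2 : i + 1 ∉ T := fun hm => (Nat.not_even_iff_odd.2 (hT2.1 hm)) hev
      have hb := hc.2 hev
      rw [Nat.even_iff] at hev
      by_cases h1 : i ∈ T
      · have := hT1.1 h1
        rw [Nat.odd_iff] at this
        simp only [h1, h2, if_true, if_false]
        omega
      · have : ¬ Odd (l[i]'(hlen' i (by omega))) := fun ho => h1 (hT1.2 ho)
        rw [Nat.not_odd_iff] at this
        simp only [h1, h2, if_false]
        omega
    · have h2 : i + 1 ∈ T := hT2.2 hod
      have hb := hc.1 hod
      rw [Nat.odd_iff] at hod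
      by_cases h1 : i ∈ T
      · have := hT1.1 h1
        rw [Nat.odd_iff] at this
        simp only [h1, h2, if_true]
        omega
      · have : ¬ Odd (l[i]'(hlen' i (by omega))) := fun ho => h1 (hT1.2 ho)
        rw [Nat.not_odd_iff] at this
        simp only [h1, h2, if_true, if_false]
        omega
  have key : ∀ i (hi : i < n),
      l[i]'(hlen' i hi) + 2 * (if 0 ∈ T then 1 else 0) = bE T i := by
    intro i
    induction i with
    | zero =>
        intro hi
        have hx := hhead (l[0]'(hlen' 0 hi))
          (by rw [List.head?_eq_getElem?, List.getElem?_eq_getElem (hlen' 0 hi)])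
        have h0 := hmemT 0 hi
        rw [bE_zero]
        rcases hx with h2 | h3
        · have h0T : 0 ∉ T := fun hm => by
            have := h0.1 hm; rw [h2, Nat.odd_iff] at this; omega
          simp [h0T, h2]
        · have h0T : 0 ∈ T := h0.2 (by rw [h3]; exact ⟨1, by ring⟩)
          simp [h0T, h3]
    | succ i ih =>
        intro hi
        have hki := ih (by omega)
        have hs := hstep i hi
        rw [bE_succ, ← hki, hs]
        ring
  -- the last entry
  have hlast' : l[n - 1]'(hlen' _ (by omega)) = 4 * h + 1 := by
    rw [List.getLast?_eq_getElem?, List.getElem?_eq_getElem (by omega)] at hlast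
    have : l.length - 1 = n - 1 := by omega
    simp only [this] at hlast
    exact Option.some.inj hlast
  have hlm : n - 1 ∈ T := (hmemT (n - 1) (by omega)).2
    (by rw [hlast']; exact ⟨2 * h, by ring⟩)
  have h0T : 0 ∉ T := by
    intro h0
    have hk := key (n - 1) (by omega)
    rw [hlast', bE] at hk
    rw [if_pos h0, if_pos hlm] at hk
    omega
  have key' : ∀ i (hi : i < n), l[i]'(hlen' i hi) = bE T i := by
    intro i hi
    have := key i hi
    rw [if_neg h0T] at this
    omega
  have hsub : T ⊆ Finset.range n := Finset.filter_subset _ _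
  have hfe : T.filter (· < n - 1) = T.erase (n - 1) := by
    ext k
    simp only [Finset.mem_filter, Finset.mem_erase]
    constructor
    · rintro ⟨hk, hlt⟩; exact ⟨by omega, hk⟩
    · rintro ⟨hne, hk⟩
      have := Finset.mem_range.1 (hsub hk)
      exact ⟨hk, by omega⟩
  have hcard : T.card = h := by
    have hk := key' (n - 1) (by omega)
    rw [hlast', bE, if_pos hlm, hfe] at hk
    have := Finset.card_erase_of_mem hlm
    have hTpos : 1 ≤ T.card := Finset.card_pos.2 ⟨n - 1, hlm⟩
    omega
  refine ⟨T, hsub, h0T, hlm, hcard, ?_⟩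
  apply List.ext_getElem (by rw [hlen, Lf_length])
  intro i h1 h2
  rw [Lf_getElem T n i (by rw [Lf_length] at h2; exact h2)]
  exact key' i (by omega)

lemma filter_lt_eq_erase (n : ℕ) (T : Finset ℕ) (hsub : T ⊆ Finset.range n) :
    T.filter (· < n - 1) = T.erase (n - 1) := by
  ext k
  simp only [Finset.mem_filter, Finset.mem_erase]
  constructor
  · rintro ⟨hk, hlt⟩; exact ⟨by omega, hk⟩
  · rintro ⟨hne, hk⟩
    have := Finset.mem_range.1 (hsub hk)
    exact ⟨hk, by omega⟩

lemma bE_last (n h : ℕ) (hn : 2 ≤ n) (hh : 1 ≤ h) (T : Finset ℕ)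
    (hsub : T ⊆ Finset.range n) (hlm : n - 1 ∈ T) (hcard : T.card = h) :
    bE T (n - 1) = 4 * h + 1 := by
  rw [bE, if_pos hlm, filter_lt_eq_erase n T hsub, Finset.card_erase_of_mem hlm, hcard]
  omega

lemma Lf_injOn (n : ℕ) (T1 T2 : Finset ℕ) (h1 : T1 ⊆ Finset.range n)
    (h2 : T2 ⊆ Finset.range n) (heq : Lf T1 n = Lf T2 n) : T1 = T2 := by
  have hbe : ∀ k, k < n → bE T1 k = bE T2 k := by
    intro k hk
    rw [← Lf_getElem T1 n k hk, ← Lf_getElem T2 n k hk]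
    exact List.getElem_of_eq heq _
  ext k
  by_cases hk : k < n
  · rw [← odd_bE, ← odd_bE, hbe k hk]
  · constructor
    · intro hm; exact absurd (Finset.mem_range.1 (h1 hm)) hk
    · intro hm; exact absurd (Finset.mem_range.1 (h2 hm)) hk

def TTf (n h N : ℕ) : Finset (Finset ℕ) :=
  (Finset.range n).powerset.filter
    (fun T => 0 ∉ T ∧ n - 1 ∈ T ∧ T.card = h ∧ ∑ i ∈ Finset.range n, bE T i = N)

lemma setA (n h N : ℕ) (hn : 2 ≤ n) (hh : 1 ≤ h) :
    {l : List ℕ | l.Pairwise (· ≤ ·) ∧ (∀ x ∈ l, 0 < x) ∧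
      (∀ x, l.head? = some x → x = 2 ∨ x = 3) ∧
      l.Chain' (fun a b =>
        (Odd b → a + 3 ≤ b ∧ b ≤ a + 4) ∧ (Even b → a ≤ b ∧ b ≤ a + 1)) ∧
      l.length = n ∧ l.getLast? = some (4 * h + 1) ∧
      l.sum = N} = ↑((TTf n h N).image (fun T => Lf T n)) := by
  ext l
  simp only [Set.mem_setOf_eq, Finset.coe_image, Set.mem_image, Finset.mem_coe,
    TTf, Finset.mem_filter, Finset.mem_powerset]
  constructor
  · rintro ⟨hs, hp, hhd, hch, hlen, hlast, hsum⟩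
    obtain ⟨T, hsub, h0, hlm, hcard, rfl⟩ := backward n h hn hh l hhd hch hlen hlast
    exact ⟨T, ⟨hsub, h0, hlm, hcard, by rw [← Lf_sum]; exact hsum⟩, rfl⟩
  · rintro ⟨T, ⟨hsub, h0, hlm, hcard, hsum⟩, rfl⟩
    refine ⟨Lf_sorted T n, ?_, ?_, Lf_chain T n, Lf_length T n, ?_, ?_⟩
    · intro x hx
      obtain ⟨i, _, rfl⟩ := List.mem_map.1 hx
      exact bE_pos T i
    · intro x hx
      rw [Lf_head T n (by omega)] at hx
      left
      have hb : bE T 0 = 2 := by rw [bE_zero, if_neg h0]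
      rw [hb] at hx
      exact (Option.some.inj hx).symm
    · rw [Lf_getLast T n (by omega), bE_last n h hn hh T hsub hlm hcard]
    · rw [Lf_sum]; exact hsum

lemma stepB (n h N : ℕ) (hn : 2 ≤ n) (hh : 1 ≤ h) :
    (TTf n h N).card = (((Finset.range (n - 2)).powersetCard (h - 1)).filter
      (fun S => 2 * n + 3 * h + 4 * ∑ k ∈ S, (k + 1) = N)).card := by
  refine Finset.card_nbij' (fun T => (T.erase (n - 1)).image (fun k => n - 2 - k))
    (fun S => insert (n - 1) (S.image (fun k => n - 2 - k))) ?_ ?_ ?_ ?_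
  -- maps into target
  · intro T hT
    dsimp only
    simp only [Finset.mem_coe, TTf, Finset.mem_filter, Finset.mem_powerset] at hT
    obtain ⟨hsub, h0, hlm, hcard, hsum⟩ := hT
    have hbnd : ∀ k ∈ T.erase (n - 1), 1 ≤ k ∧ k ≤ n - 2 := by
      intro k hk
      rw [Finset.mem_erase] at hk
      have := Finset.mem_range.1 (hsub hk.2)
      have hk0 : k ≠ 0 := fun e => h0 (e ▸ hk.2)
      omega
    have hinj : ∀ x ∈ T.erase (n - 1), ∀ y ∈ T.erase (n - 1),
        n - 2 - x = n - 2 - y → x = y := by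
      intro x hx y hy hxy
      have := hbnd x hx; have := hbnd y hy; omega
    simp only [Finset.mem_coe, Finset.mem_filter, Finset.mem_powersetCard]
    refine ⟨⟨?_, ?_⟩, ?_⟩
    · intro x hx
      obtain ⟨k, hk, rfl⟩ := Finset.mem_image.1 hx
      have := hbnd k hk
      rw [Finset.mem_range]
      omega
    · rw [Finset.card_image_of_injOn hinj, Finset.card_erase_of_mem hlm, hcard]
    · rw [Finset.sum_image hinj]
      have hw : ∑ k ∈ T.erase (n - 1), (n - 2 - k + 1) = ∑ k ∈ T, (n - 1 - k) := by
        rw [← Finset.sum_erase_add T _ hlm]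
        have : n - 1 - (n - 1) = 0 := by omega
        rw [this, add_zero]
        apply Finset.sum_congr rfl
        intro k hk
        have := hbnd k hk
        omega
      rw [hw]
      rw [sum_bE n T hsub, hcard] at hsum
      omega
  -- reverse map into source
  · intro S hS
    dsimp only
    simp only [Finset.mem_coe, Finset.mem_filter, Finset.mem_powersetCard] at hS
    obtain ⟨⟨hsub, hcard⟩, hsum⟩ := hS
    have hbnd : ∀ k ∈ S, k < n - 2 := by
      intro k hk
      exact Finset.mem_range.1 (hsub hk)
    have hni : n - 1 ∉ S.image (fun k => n - 2 - k) := by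
      intro hm
      obtain ⟨k, hk, he⟩ := Finset.mem_image.1 hm
      have := hbnd k hk
      omega
    have hinj : ∀ x ∈ S, ∀ y ∈ S, n - 2 - x = n - 2 - y → x = y := by
      intro x hx y hy hxy
      have := hbnd x hx; have := hbnd y hy; omega
    have hTsub : insert (n - 1) (S.image (fun k => n - 2 - k)) ⊆ Finset.range n := by
      intro x hx
      rcases Finset.mem_insert.1 hx with rfl | hx'
      · rw [Finset.mem_range]; omega
      · obtain ⟨k, hk, rfl⟩ := Finset.mem_image.1 hx'
        have := hbnd k hk
        rw [Finset.mem_range]; omega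
    have hTcard : (insert (n - 1) (S.image (fun k => n - 2 - k))).card = h := by
      rw [Finset.card_insert_of_notMem hni, Finset.card_image_of_injOn hinj, hcard]
      omega
    simp only [Finset.mem_coe, TTf, Finset.mem_filter, Finset.mem_powerset]
    refine ⟨hTsub, ?_, Finset.mem_insert_self _ _, hTcard, ?_⟩
    · intro h0
      rcases Finset.mem_insert.1 h0 with he | hx'
      · omega
      · obtain ⟨k, hk, he⟩ := Finset.mem_image.1 hx'
        have := hbnd k hk
        omega
    · rw [sum_bE n _ hTsub, hTcard, Finset.sum_insert hni]
      have h1 : n - 1 - (n - 1) = 0 := by omega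
      rw [h1, Finset.sum_image hinj, zero_add]
      have h2 : ∑ k ∈ S, (n - 1 - (n - 2 - k)) = ∑ k ∈ S, (k + 1) := by
        apply Finset.sum_congr rfl
        intro k hk
        have := hbnd k hk
        omega
      rw [h2]
      omega
  -- left inverse
  · intro T hT
    dsimp only
    simp only [Finset.mem_coe, TTf, Finset.mem_filter, Finset.mem_powerset] at hT
    obtain ⟨hsub, h0, hlm, hcard, -⟩ := hT
    rw [Finset.image_image]
    have himg : (T.erase (n - 1)).image ((fun k => n - 2 - k) ∘ (fun k => n - 2 - k))
        = T.erase (n - 1) := by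
      rw [Finset.image_congr (g := id), Finset.image_id]
      intro k hk
      simp only [Finset.mem_coe] at hk
      rw [Finset.mem_erase] at hk
      have := Finset.mem_range.1 (hsub hk.2)
      have hk0 : k ≠ 0 := fun e => h0 (e ▸ hk.2)
      simp only [Function.comp_apply, id_eq]
      omega
    rw [himg, Finset.insert_erase hlm]
  -- right inverse
  · intro S hS
    dsimp only
    simp only [Finset.mem_coe, Finset.mem_filter, Finset.mem_powersetCard] at hS
    obtain ⟨⟨hsub, hcard⟩, -⟩ := hS
    have hbnd : ∀ k ∈ S, k < n - 2 := by
      intro k hk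
      exact Finset.mem_range.1 (hsub hk)
    have hni : n - 1 ∉ S.image (fun k => n - 2 - k) := by
      intro hm
      obtain ⟨k, hk, he⟩ := Finset.mem_image.1 hm
      have := hbnd k hk
      omega
    rw [Finset.erase_insert hni, Finset.image_image]
    rw [Finset.image_congr (g := id), Finset.image_id]
    intro k hk
    simp only [Finset.mem_coe] at hk
    have := hbnd k hk
    simp only [Function.comp_apply, id_eq]
    omega


lemma coeff_pow_mul_Gg (c m b N : ℕ) :
    (PowerSeries.coeff (R := ℚ) N) ((PowerSeries.X : PowerSeries ℚ) ^ c * Gg m b) =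
      ((((Finset.range m).powersetCard b).filter
        (fun S => c + 4 * ∑ k ∈ S, (k + 1) = N)).card : ℚ) := by
  rw [Gg, Finset.mul_sum]
  simp_rw [← pow_add]
  rw [map_sum]
  simp_rw [PowerSeries.coeff_X_pow]
  rw [← Finset.sum_boole]
  apply Finset.sum_congr rfl
  intro S _
  by_cases hc : c + 4 * ∑ k ∈ S, (k + 1) = N
  · rw [if_pos hc, if_pos hc.symm]
  · rw [if_neg hc, if_neg (fun he => hc he.symm)]

lemma gauss_conv (n h : ℕ) (hn : 2 ≤ n) (hh : 1 ≤ h) :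
    (PowerSeries.X : PowerSeries ℚ) ^ (2 * n + 2 * h ^ 2 + h) * gaussBinom 4 (n - 2) (h - 1) =
      (PowerSeries.X : PowerSeries ℚ) ^ (2 * n + 3 * h) * Gg (n - 2) (h - 1) := by
  by_cases hle : h - 1 ≤ n - 2
  · have hGg : Gg (n - 2) (h - 1) =
        (PowerSeries.X : PowerSeries ℚ) ^ (2 * ((h - 1) * (h - 1 + 1))) *
          gaussBinom 4 (n - 2) (h - 1) := by
      rw [gaussBinom, if_pos hle]
      calc Gg (n - 2) (h - 1)
          = Gg (n - 2) (h - 1) * (qPoch 4 (h - 1) * (qPoch 4 (h - 1))⁻¹) *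
            (qPoch 4 (n - 2 - (h - 1)) * (qPoch 4 (n - 2 - (h - 1)))⁻¹) := by
            rw [qPoch_mul_inv _ _ (by norm_num), qPoch_mul_inv _ _ (by norm_num)]
            ring
        _ = (Gg (n - 2) (h - 1) * qPoch 4 (h - 1) * qPoch 4 (n - 2 - (h - 1))) *
            ((qPoch 4 (h - 1))⁻¹ * (qPoch 4 (n - 2 - (h - 1)))⁻¹) := by ring
        _ = _ := by rw [Gg_qPoch (n - 2) (h - 1) hle]; ring
    rw [hGg, ← mul_assoc, ← pow_add]
    congr 2
    obtain ⟨h', rfl⟩ : ∃ h', h = h' + 1 := ⟨h - 1, by omega⟩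
    simp only [Nat.add_sub_cancel]
    ring
  · rw [gaussBinom, if_neg hle, mul_zero, Gg_eq_zero _ _ (by omega), mul_zero]

/-- the generating function (stated coefficientwise) for the
basis partitions of the Glasgow SIP class with `n` parts and largest part
`4h + 1` is `q^{2n+2h²+h} [n−2 choose h−1]_{q⁴}`. -/
theorem stmt11 (n h : ℕ) (hn : 2 ≤ n) (hh : 1 ≤ h) (N : ℕ) :
    ({l : List ℕ | l.Pairwise (· ≤ ·) ∧ (∀ x ∈ l, 0 < x) ∧
      (∀ x, l.head? = some x → x = 2 ∨ x = 3) ∧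
      l.Chain' (fun a b =>
        (Odd b → a + 3 ≤ b ∧ b ≤ a + 4) ∧ (Even b → a ≤ b ∧ b ≤ a + 1)) ∧
      l.length = n ∧ l.getLast? = some (4 * h + 1) ∧
      l.sum = N}).ncard =
    PowerSeries.coeff (R := ℚ) N
      ((PowerSeries.X : PowerSeries ℚ) ^ (2 * n + 2 * h ^ 2 + h) *
        gaussBinom 4 (n - 2) (h - 1)) := by
  rw [gauss_conv n h hn hh, coeff_pow_mul_Gg, setA n h N hn hh, Set.ncard_coe_finset]
  rw [Finset.card_image_of_injOn]
  · rw [stepB n h N hn hh]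
  · intro T1 h1 T2 h2 heq
    simp only [Finset.mem_coe, TTf, Finset.mem_filter, Finset.mem_powerset] at h1 h2
    exact Lf_injOn n T1 T2 h1.1 h2.1 heq
end

section
/- Fix an integer r ≥ −1 and an integer m ≥ 1. For each positive integer v, let β_r(m, v) be the number of partitions of v with n copies of n having exactly m parts, such that when the parts are listed in ascending lexicographic order, the weighted difference between each pair of consecutive parts is exactly r, and the smallest part has its value equal to its subscript (i.e., is of the form i_i). Then ∑_{v≥1} β_r(m, v)·q^v = q^{m² + r·m(m−1)/2} / ∏_{j=1}^{m} (1 − q^{2j−1}) as formal power series in q. -/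
open Finset

/-- Lexicographic order on parts `m_i = (m, i)` of a partition with n copies of n. -/
def LexLe (p q : ℕ × ℕ) : Prop := p.1 < q.1 ∨ (p.1 = q.1 ∧ p.2 ≤ q.2)

lemma inv_factor (n : ℕ) :
    ((PowerSeries.mk fun k => if (n+1) ∣ k then (1:ℚ) else 0) *
      (1 - (PowerSeries.X : PowerSeries ℚ) ^ (n+1))) = 1 := by
  ext d
  rw [mul_sub, mul_one, mul_comm, map_sub, PowerSeries.coeff_X_pow_mul',
    PowerSeries.coeff_mk, PowerSeries.coeff_one]
  rcases eq_or_ne d 0 with rfl | hd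
  · simp
  · rw [if_neg hd]
    by_cases h1 : (n+1) ∣ d
    · have hle : n+1 ≤ d := Nat.le_of_dvd (Nat.pos_of_ne_zero hd) h1
      rw [if_pos h1, if_pos hle, PowerSeries.coeff_mk,
        if_pos ((Nat.dvd_sub h1 dvd_rfl))]
      ring
    · rw [if_neg h1]
      simp only [PowerSeries.coeff_mk]
      split_ifs with h2 h3
      · exact absurd (by
          have hd2 : d = (d - (n+1)) + (n+1) := by omega
          exact hd2 ▸ Nat.dvd_add h3 dvd_rfl) h1
      · ring
      · ring

lemma prod_inv (m : ℕ) :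
    (∏ j ∈ Finset.range m, (1 - (PowerSeries.X : PowerSeries ℚ) ^ (2 * j + 1)))⁻¹ =
      ∏ j ∈ Finset.range m, PowerSeries.mk fun k => if (2*j+1) ∣ k then (1:ℚ) else 0 := by
  symm
  rw [PowerSeries.eq_inv_iff_mul_eq_one]
  · rw [← Finset.prod_mul_distrib]
    rw [Finset.prod_eq_one]
    intro j _
    exact inv_factor (2*j)
  · rw [map_prod]
    rw [Finset.prod_eq_one]
    · norm_num
    intro j _
    simp

lemma coeff_Q (m w : ℕ) :
    PowerSeries.coeff w
      (∏ j ∈ Finset.range m, PowerSeries.mk fun k => if (2*j+1) ∣ k then (1:ℚ) else 0) =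
    (((finsuppAntidiag (Finset.range m) w).filter
      (fun l => ∀ j ∈ Finset.range m, (2*j+1) ∣ l j)).card : ℚ) := by
  rw [PowerSeries.coeff_prod]
  rw [← Finset.sum_boole]
  apply Finset.sum_congr rfl
  intro l _
  rw [← Finset.prod_boole]
  apply Finset.prod_congr rfl
  intro i _
  rw [PowerSeries.coeff_mk]

def ii (m : ℕ) (c : ℕ → ℕ) (k : ℕ) : ℕ := 1 + c (m - 1 - k)

def aa (r : ℤ) (m : ℕ) (c : ℕ → ℕ) (k : ℕ) : ℤ :=
  (ii m c 0 : ℤ) + ∑ t ∈ Finset.range k, ((ii m c (t+1) : ℤ) + (ii m c t : ℤ) + r)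

lemma ii_pos (m : ℕ) (c : ℕ → ℕ) (k : ℕ) : 1 ≤ ii m c k := Nat.le_add_right 1 _

lemma aa_zero (r : ℤ) (m : ℕ) (c : ℕ → ℕ) : aa r m c 0 = (ii m c 0 : ℤ) := by
  simp [aa]

lemma aa_succ (r : ℤ) (m : ℕ) (c : ℕ → ℕ) (k : ℕ) :
    aa r m c (k+1) = aa r m c k + (ii m c (k+1) : ℤ) + (ii m c k : ℤ) + r := by
  rw [aa, Finset.sum_range_succ, aa]; ring

lemma aa_ge (r : ℤ) (hr : -1 ≤ r) (m : ℕ) (c : ℕ → ℕ) (k : ℕ) :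
    (ii m c k : ℤ) ≤ aa r m c k := by
  induction k with
  | zero => rw [aa_zero]
  | succ k ih =>
    rw [aa_succ]
    have h1 := ii_pos m c k
    have h2 := ii_pos m c (k+1)
    omega

lemma aa_pos (r : ℤ) (hr : -1 ≤ r) (m : ℕ) (c : ℕ → ℕ) (k : ℕ) :
    1 ≤ aa r m c k := le_trans (by exact_mod_cast ii_pos m c k) (aa_ge r hr m c k)

lemma aa_mono (r : ℤ) (hr : -1 ≤ r) (m : ℕ) (c : ℕ → ℕ) : StrictMono (aa r m c) := by
  apply strictMono_nat_of_lt_succ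
  intro k
  rw [aa_succ]
  have h1 := ii_pos m c k
  have h2 := ii_pos m c (k+1)
  omega

lemma an_eq (r : ℤ) (i : ℕ → ℤ) (n : ℕ) :
    i 0 + ∑ t ∈ Finset.range n, (i (t+1) + i t + r) =
      2 * ∑ t ∈ Finset.range n, i t + i n + r * n := by
  have h1 : ∑ t ∈ Finset.range n, (i (t+1) + i t + r)
      = (∑ t ∈ Finset.range n, i (t+1)) + (∑ t ∈ Finset.range n, i t) + n * r := by
    rw [Finset.sum_add_distrib, Finset.sum_add_distrib, Finset.sum_const, nsmul_eq_mul, Finset.card_range]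
  have h2 : i 0 + ∑ t ∈ Finset.range n, i (t+1) = (∑ t ∈ Finset.range n, i t) + i n := by
    have := Finset.sum_range_succ' i n
    have h3 := Finset.sum_range_succ i n
    rw [h3] at this
    linarith
  rw [h1]; push_cast; linarith

lemma sum_aux (r : ℤ) (i : ℕ → ℤ) (n : ℕ) :
    2 * ∑ k ∈ Finset.range n, (i 0 + ∑ t ∈ Finset.range k, (i (t+1) + i t + r)) =
      (∑ k ∈ Finset.range n, 2 * (2*((n:ℤ)-1-k)+1) * i k) + r * n * (n-1) := by
  induction n with
  | zero => simp
  | succ n ih =>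
    rw [Finset.sum_range_succ, mul_add, ih, an_eq]
    have h4 : ∑ k ∈ Finset.range (n+1), 2 * (2*(((n:ℤ)+1)-1-k)+1) * i k
        = (∑ k ∈ Finset.range n, (2 * (2*((n:ℤ)-1-k)+1) * i k + 4 * i k)) + 2 * i n := by
      rw [Finset.sum_range_succ]
      congr 1
      · apply Finset.sum_congr rfl
        intro k _
        ring
      · ring
    rw [show ((n:ℤ)+1) = ((n+1 : ℕ) : ℤ) by push_cast; ring] at h4
    rw [h4, Finset.sum_add_distrib]
    have h5 : (∑ k ∈ Finset.range n, (4:ℤ) * i k) = 4 * ∑ k ∈ Finset.range n, i k := by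
      rw [Finset.mul_sum]
    rw [h5]
    push_cast
    ring

lemma sum_odd (m : ℕ) : ∑ j ∈ Finset.range m, (2*(j:ℤ)+1) = (m:ℤ)^2 := by
  induction m with
  | zero => simp
  | succ n ih => rw [Finset.sum_range_succ, ih]; push_cast; ring

lemma sum_aa (r : ℤ) (m : ℕ) (c : ℕ → ℕ) :
    2 * ∑ k ∈ Finset.range m, aa r m c k =
      2*(m:ℤ)^2 + r*(m:ℤ)*((m:ℤ)-1) + 2 * ∑ j ∈ Finset.range m, (2*(j:ℤ)+1) * (c j : ℤ) := by
  have h := sum_aux r (fun k => (ii m c k : ℤ)) m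
  have haa : ∀ k, aa r m c k =
      (ii m c 0 : ℤ) + ∑ t ∈ Finset.range k, ((ii m c (t+1) : ℤ) + (ii m c t : ℤ) + r) :=
    fun k => rfl
  simp only [← haa] at h
  rw [h]
  have h2 : ∀ k ∈ Finset.range m, 2 * (2*((m:ℤ)-1-k)+1) * (ii m c k : ℤ)
      = (fun j : ℕ => 2*(2*(j:ℤ)+1) * (1 + (c j : ℤ))) (m - 1 - k) := by
    intro k hk
    rw [Finset.mem_range] at hk
    have : ((m:ℤ)-1-(k:ℤ)) = ((m - 1 - k : ℕ) : ℤ) := by push_cast; omega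
    rw [this, ii]
    push_cast
    ring
  rw [Finset.sum_congr rfl h2,
    Finset.sum_range_reflect (fun j : ℕ => 2*(2*(j:ℤ)+1) * (1 + (c j : ℤ))) m]
  have h3 : ∑ j ∈ Finset.range m, 2*(2*(j:ℤ)+1) * (1 + (c j : ℤ))
      = 2 * (∑ j ∈ Finset.range m, (2*(j:ℤ)+1))
        + 2 * ∑ j ∈ Finset.range m, (2*(j:ℤ)+1) * (c j : ℤ) := by
    rw [Finset.mul_sum, Finset.mul_sum, ← Finset.sum_add_distrib]
    apply Finset.sum_congr rfl
    intro j _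
    ring
  rw [h3, sum_odd]
  ring

lemma list_sum_range {M : Type*} [AddCommMonoid M] (f : ℕ → M) (n : ℕ) :
    ((List.range n).map f).sum = ∑ i ∈ Finset.range n, f i := by
  induction n with
  | zero => simp
  | succ k ih =>
    rw [List.range_succ, Finset.sum_range_succ, List.map_append, List.sum_append, ih]; simp

lemma head?_eq_zero {α : Type*} (l : List α) (h : 0 < l.length) : l.head? = some l[0] := by
  cases l with
  | nil => simp at h
  | cons a t => rfl

def gl (r : ℤ) (m : ℕ) (c : ℕ → ℕ) : List (ℕ × ℕ) :=
  (List.range m).map fun k => ((aa r m c k).toNat, ii m c k)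

lemma length_gl (r : ℤ) (m : ℕ) (c : ℕ → ℕ) : (gl r m c).length = m := by simp [gl]

lemma getElem_gl (r : ℤ) (m : ℕ) (c : ℕ → ℕ) (k : ℕ) (hk : k < (gl r m c).length) :
    (gl r m c)[k] = ((aa r m c k).toNat, ii m c k) := by
  simp [gl]

lemma toNat_aa (r : ℤ) (hr : -1 ≤ r) (m : ℕ) (c : ℕ → ℕ) (k : ℕ) :
    ((aa r m c k).toNat : ℤ) = aa r m c k :=
  Int.toNat_of_nonneg (le_trans (by norm_num) (aa_pos r hr m c k))

lemma gl_sorted (r : ℤ) (hr : -1 ≤ r) (m : ℕ) (c : ℕ → ℕ) :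
    (gl r m c).Pairwise LexLe := by
  rw [gl, List.pairwise_map]
  apply (List.pairwise_lt_range (n := m)).imp
  intro a b hab
  left
  simp only []
  have := aa_mono r hr m c hab
  have h1 := toNat_aa r hr m c a
  have h2 := toNat_aa r hr m c b
  omega

lemma gl_bounds (r : ℤ) (hr : -1 ≤ r) (m : ℕ) (c : ℕ → ℕ) :
    ∀ p ∈ gl r m c, 1 ≤ p.2 ∧ p.2 ≤ p.1 := by
  intro p hp
  rw [gl, List.mem_map] at hp
  obtain ⟨k, _, rfl⟩ := hp
  refine ⟨ii_pos m c k, ?_⟩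
  have h1 := aa_ge r hr m c k
  have h2 := toNat_aa r hr m c k
  simp only []
  omega

lemma gl_head (r : ℤ) (hr : -1 ≤ r) (m : ℕ) (hm : 1 ≤ m) (c : ℕ → ℕ) :
    ∀ p : ℕ × ℕ, (gl r m c).head? = some p → p.1 = p.2 := by
  intro p hp
  have hlen : 0 < (gl r m c).length := by rw [length_gl]; omega
  rw [head?_eq_zero _ hlen] at hp
  rw [getElem_gl] at hp
  cases hp
  simp only []
  rw [aa_zero]
  exact Int.toNat_natCast _

lemma gl_chain (r : ℤ) (hr : -1 ≤ r) (m : ℕ) (c : ℕ → ℕ) :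
    (gl r m c).Chain' (fun p q => (q.1 : ℤ) - (p.1 : ℤ) - (q.2 : ℤ) - (p.2 : ℤ) = r) := by
  unfold List.Chain'
  rw [gl, List.isChain_map]
  rcases m with _ | m'
  · simp
  rw [List.isChain_range_succ]
  intro k _
  simp only [Nat.succ_eq_add_one]
  have h1 := toNat_aa r hr (m'+1) c k
  have h2 := toNat_aa r hr (m'+1) c (k+1)
  have h3 := aa_succ r (m'+1) c k
  omega

lemma gl_sum (r : ℤ) (hr : -1 ≤ r) (m : ℕ) (e : ℕ)
    (he : 2 * (e : ℤ) = 2 * (m : ℤ) ^ 2 + r * (m : ℤ) * ((m : ℤ) - 1)) (c : ℕ → ℕ) :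
    ((gl r m c).map Prod.fst).sum = e + ∑ j ∈ Finset.range m, (2*j+1) * c j := by
  rw [gl, List.map_map]
  have : (Prod.fst ∘ fun k => ((aa r m c k).toNat, ii m c k)) =
      fun k => (aa r m c k).toNat := rfl
  rw [this, list_sum_range]
  have hsum := sum_aa r m c
  have hcast : ((∑ i ∈ Finset.range m, (aa r m c i).toNat : ℕ) : ℤ)
      = ∑ i ∈ Finset.range m, aa r m c i := by
    push_cast
    exact Finset.sum_congr rfl fun k _ => toNat_aa r hr m c k
  have hrhs : ((e + ∑ j ∈ Finset.range m, (2*j+1) * c j : ℕ) : ℤ)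
      = (e : ℤ) + ∑ j ∈ Finset.range m, (2*(j:ℤ)+1) * (c j : ℤ) := by
    push_cast
    try congr 1
    try exact Finset.sum_congr rfl fun j _ => by ring
  have key : ((∑ i ∈ Finset.range m, (aa r m c i).toNat : ℕ) : ℤ)
      = ((e + ∑ j ∈ Finset.range m, (2*j+1) * c j : ℕ) : ℤ) := by
    rw [hcast, hrhs]; linarith
  exact_mod_cast key

lemma chain'_getElem {α} (R : α → α → Prop) (l : List α) (h : l.Chain' R) (i : ℕ)
    (hi : i + 1 < l.length) : R l[i] l[i+1] := by
  unfold List.Chain' at h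
  rw [List.isChain_iff_getElem] at h
  have := h i (by omega)
  simpa using this

lemma recon (r : ℤ) (m : ℕ) (hm : 1 ≤ m) (L : List (ℕ × ℕ))
    (hb : ∀ p ∈ L, 1 ≤ p.2 ∧ p.2 ≤ p.1) (hlen : L.length = m)
    (hhead : ∀ p : ℕ × ℕ, L.head? = some p → p.1 = p.2)
    (hch : L.Chain' (fun p q => (q.1 : ℤ) - (p.1 : ℤ) - (q.2 : ℤ) - (p.2 : ℤ) = r)) :
    L = gl r m (fun j => (L.getD (m-1-j) (0,0)).2 - 1) := by
  set c : ℕ → ℕ := fun j => (L.getD (m-1-j) (0,0)).2 - 1 with hc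
  have hb' : ∀ k (hk : k < m), 1 ≤ L[k].2 ∧ L[k].2 ≤ L[k].1 := by
    intro k hk
    exact hb _ (List.getElem_mem (by omega))
  have h_ii : ∀ k (hk : k < m), ii m c k = (L[k]'(by omega)).2 := by
    intro k hk
    have h1 : m - 1 - (m - 1 - k) = k := by omega
    have h2 : m - 1 - k < L.length := by omega
    rw [ii, hc]
    simp only [h1]
    rw [List.getD_eq_getElem L (0,0) (by omega)]
    have := (hb' k hk).1
    omega
  have h_aa : ∀ k (hk : k < m), aa r m c k = ((L[k]'(by omega)).1 : ℤ) := by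
    intro k
    induction k with
    | zero =>
      intro hk
      have hlen0 : 0 < L.length := by omega
      have := hhead L[0] (head?_eq_zero L hlen0)
      rw [aa_zero, h_ii 0 hk, this]
    | succ k ihk =>
      intro hk
      have hk' : k < m := by omega
      have hchk := chain'_getElem _ L hch k (by omega)
      rw [aa_succ, ihk hk', h_ii (k+1) hk, h_ii k hk']
      omega
  apply List.ext_getElem
  · rw [hlen, length_gl]
  · intro k hk1 hk2
    have hk : k < m := by omega
    rw [getElem_gl]
    have ha := h_aa k hk
    have h2 : (aa r m c k).toNat = L[k].1 := by omega
    have h1 := h_ii k hk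
    rw [Prod.ext_iff]
    exact ⟨h2.symm, h1.symm⟩

lemma ii_congr (m : ℕ) {c₁ c₂ : ℕ → ℕ} (h : ∀ j < m, c₁ j = c₂ j) (k : ℕ) (hk : k < m) :
    ii m c₁ k = ii m c₂ k := by
  rw [ii, ii, h _ (by omega)]

lemma aa_congr (r : ℤ) (m : ℕ) {c₁ c₂ : ℕ → ℕ} (h : ∀ j < m, c₁ j = c₂ j) (k : ℕ)
    (hk : k < m) : aa r m c₁ k = aa r m c₂ k := by
  rw [aa, aa, ii_congr m h 0 (by omega)]
  congr 1
  apply Finset.sum_congr rfl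
  intro t ht
  rw [Finset.mem_range] at ht
  rw [ii_congr m h t (by omega), ii_congr m h (t+1) (by omega)]

lemma gl_congr (r : ℤ) (m : ℕ) {c₁ c₂ : ℕ → ℕ} (h : ∀ j < m, c₁ j = c₂ j) :
    gl r m c₁ = gl r m c₂ := by
  rw [gl, gl]
  apply List.map_congr_left
  intro k hk
  rw [List.mem_range] at hk
  rw [aa_congr r m h k hk, ii_congr m h k hk]

lemma count_lemma (r : ℤ) (hr : -1 ≤ r) (m : ℕ) (hm : 1 ≤ m) (e : ℕ)
    (he : 2 * (e : ℤ) = 2 * (m : ℤ) ^ 2 + r * (m : ℤ) * ((m : ℤ) - 1)) (v : ℕ) :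
    ({l : List (ℕ × ℕ) | l.Pairwise LexLe ∧ (∀ p ∈ l, 1 ≤ p.2 ∧ p.2 ≤ p.1) ∧
        l.length = m ∧ (∀ p : ℕ × ℕ, l.head? = some p → p.1 = p.2) ∧
        l.Chain' (fun p q => (q.1 : ℤ) - (p.1 : ℤ) - (q.2 : ℤ) - (p.2 : ℤ) = r) ∧
        (l.map Prod.fst).sum = v}.ncard : ℚ) =
      if e ≤ v then
        ((((finsuppAntidiag (Finset.range m) (v - e)).filter
          (fun l => ∀ j ∈ Finset.range m, (2*j+1) ∣ l j)).card : ℕ) : ℚ)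
      else 0 := by
  set S : Set (List (ℕ × ℕ)) := {l : List (ℕ × ℕ) | l.Pairwise LexLe ∧
      (∀ p ∈ l, 1 ≤ p.2 ∧ p.2 ≤ p.1) ∧
        l.length = m ∧ (∀ p : ℕ × ℕ, l.head? = some p → p.1 = p.2) ∧
        l.Chain' (fun p q => (q.1 : ℤ) - (p.1 : ℤ) - (q.2 : ℤ) - (p.2 : ℤ) = r) ∧
        (l.map Prod.fst).sum = v} with hS
  -- if L ∈ S then L = gl r m c and v = e + ∑ ...
  have key : ∀ L ∈ S, ∃ c : ℕ → ℕ, L = gl r m c ∧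
      v = e + ∑ j ∈ Finset.range m, (2*j+1) * c j := by
    intro L hL
    obtain ⟨h1, h2, h3, h4, h5, h6⟩ := hL
    refine ⟨_, recon r m hm L h2 h3 h4 h5, ?_⟩
    rw [← h6]
    conv_lhs => rw [recon r m hm L h2 h3 h4 h5]
    rw [gl_sum r hr m e he]
  by_cases hev : e ≤ v
  · rw [if_pos hev]
    set D := ((finsuppAntidiag (Finset.range m) (v - e)).filter
      (fun l => ∀ j ∈ Finset.range m, (2*j+1) ∣ l j)) with hD
    set F : (ℕ →₀ ℕ) → List (ℕ × ℕ) := fun l => gl r m (fun j => l j / (2*j+1)) with hF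
    have hmemD : ∀ l ∈ D, ((Finset.range m).sum l = v - e) ∧ l.support ⊆ Finset.range m
        ∧ ∀ j ∈ Finset.range m, (2*j+1) ∣ l j := by
      intro l hl
      rw [hD, Finset.mem_filter, mem_finsuppAntidiag] at hl
      exact ⟨hl.1.1, hl.1.2, hl.2⟩
    have hFsum : ∀ l ∈ D, ∑ j ∈ Finset.range m, (2*j+1) * (l j / (2*j+1)) = v - e := by
      intro l hl
      obtain ⟨hs, _, hdvd⟩ := hmemD l hl
      rw [← hs]
      apply Finset.sum_congr rfl
      intro j hj
      exact Nat.mul_div_cancel' (hdvd j hj)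
    have hset : S = ↑(D.image F) := by
      ext L
      simp only [Finset.coe_image, Set.mem_image, Finset.mem_coe]
      constructor
      · intro hL
        obtain ⟨c, hLc, hv⟩ := key L hL
        have hsupp0 : ∀ j, (if j < m then (2*j+1) * c j else 0) ≠ 0 → j ∈ Finset.range m := by
          intro j hj
          rw [Finset.mem_range]
          by_contra h
          simp [h] at hj
        set l0 : ℕ →₀ ℕ := Finsupp.onFinset (Finset.range m)
          (fun j => if j < m then (2*j+1) * c j else 0) hsupp0 with hl0
        have hl0app : ∀ j < m, l0 j = (2*j+1) * c j := by
          intro j hj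
          rw [hl0, Finsupp.onFinset_apply, if_pos hj]
        refine ⟨l0, ?_, ?_⟩
        · rw [hD, Finset.mem_filter, mem_finsuppAntidiag]
          refine ⟨⟨?_, Finsupp.support_onFinset_subset⟩, ?_⟩
          · have hss : (Finset.range m).sum ⇑l0 = ∑ j ∈ Finset.range m, (2*j+1) * c j :=
              Finset.sum_congr rfl fun j hj => hl0app j (Finset.mem_range.mp hj)
            rw [hss]
            omega
          · intro j hj
            rw [hl0app j (Finset.mem_range.mp hj)]
            exact Dvd.intro _ rfl
        · rw [hF]
          simp only []
          rw [hLc]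
          apply gl_congr
          intro j hj
          rw [hl0app j hj, Nat.mul_div_cancel_left _ (by omega)]
      · rintro ⟨l, hl, rfl⟩
        obtain ⟨hs, hsupp, hdvd⟩ := hmemD l hl
        rw [hS]
        simp only [Set.mem_setOf_eq]
        refine ⟨gl_sorted r hr m _, gl_bounds r hr m _, length_gl r m _,
          gl_head r hr m hm _, gl_chain r hr m _, ?_⟩
        rw [hF]
        rw [gl_sum r hr m e he, hFsum l hl]
        omega
    rw [hset, Set.ncard_coe_finset]
    rw [Finset.card_image_of_injOn]
    intro l₁ hl₁ l₂ hl₂ hFl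
    rw [Finset.mem_coe] at hl₁ hl₂
    obtain ⟨_, hsupp₁, hdvd₁⟩ := hmemD l₁ hl₁
    obtain ⟨_, hsupp₂, hdvd₂⟩ := hmemD l₂ hl₂
    ext j
    by_cases hj : j < m
    · have hk : m - 1 - j < m := by omega
      have h1 : (gl r m fun j => l₁ j / (2*j+1)).getD (m-1-j) (0,0)
          = (gl r m fun j => l₂ j / (2*j+1)).getD (m-1-j) (0,0) := by
        simp only [hF] at hFl
        rw [hFl]
      rw [List.getD_eq_getElem _ _ (by rw [length_gl]; omega),
        List.getD_eq_getElem _ _ (by rw [length_gl]; omega), getElem_gl, getElem_gl] at h1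
      have h2 := congrArg Prod.snd h1
      simp only [] at h2
      rw [ii, ii, show m - 1 - (m - 1 - j) = j by omega] at h2
      have d1 := hdvd₁ j (Finset.mem_range.mpr hj)
      have d2 := hdvd₂ j (Finset.mem_range.mpr hj)
      obtain ⟨x1, hx1⟩ := d1
      obtain ⟨x2, hx2⟩ := d2
      rw [hx1, hx2] at h2 ⊢
      rw [Nat.mul_div_cancel_left _ (by omega), Nat.mul_div_cancel_left _ (by omega)] at h2
      have hx : x1 = x2 := by omega
      rw [hx]
    · have h1 : l₁ j = 0 := by
        by_contra h
        exact hj (Finset.mem_range.mp (hsupp₁ (Finsupp.mem_support_iff.mpr h)))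
      have h2 : l₂ j = 0 := by
        by_contra h
        exact hj (Finset.mem_range.mp (hsupp₂ (Finsupp.mem_support_iff.mpr h)))
      rw [h1, h2]
  · rw [if_neg hev]
    have : S = ∅ := by
      ext L
      simp only [Set.mem_empty_iff_false, iff_false]
      intro hL
      obtain ⟨c, _, hv⟩ := key L hL
      omega
    rw [this]
    simp

/-- Theorem 20 of the paper,
`∑_v β_r(m,v) q^v = q^{m² + r·m(m−1)/2} / (q;q²)_m`.
The exponent `e` is given by `2e = 2m² + r·m(m−1)`; a partition with n copies
of n is represented by its list of parts in ascending lexicographic order. -/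
theorem stmt14 (r : ℤ) (hr : -1 ≤ r) (m : ℕ) (hm : 1 ≤ m) (e : ℕ)
    (he : 2 * (e : ℤ) = 2 * (m : ℤ) ^ 2 + r * (m : ℤ) * ((m : ℤ) - 1)) :
    (PowerSeries.mk fun v : ℕ =>
      (({l : List (ℕ × ℕ) | l.Pairwise LexLe ∧ (∀ p ∈ l, 1 ≤ p.2 ∧ p.2 ≤ p.1) ∧
        l.length = m ∧ (∀ p : ℕ × ℕ, l.head? = some p → p.1 = p.2) ∧
        l.Chain' (fun p q => (q.1 : ℤ) - (p.1 : ℤ) - (q.2 : ℤ) - (p.2 : ℤ) = r) ∧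
        (l.map Prod.fst).sum = v}.ncard : ℚ))) =
    (PowerSeries.X : PowerSeries ℚ) ^ e *
      (∏ j ∈ Finset.range m, (1 - (PowerSeries.X : PowerSeries ℚ) ^ (2 * j + 1)))⁻¹ := by
  rw [prod_inv m]
  ext v
  rw [PowerSeries.coeff_mk, PowerSeries.coeff_X_pow_mul']
  rw [count_lemma r hr m hm e he v]
  by_cases h : e ≤ v
  · rw [if_pos h, if_pos h, coeff_Q]
  · rw [if_neg h, if_neg h]
end

section
/- For every positive integer v, the number of partitions of v with n copies of n in which, when the parts are listed in ascending lexicographic order, the weighted difference between each pair of consecutive parts is exactly −1 and the smallest part has its value equal to its subscript (i.e., is of the form j_j), equals the coefficient of q^v in the series ∑_{n≥0} q^{n(n+1)/2} / (q;q²)_n. -/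
open Finset PowerSeries

noncomputable def invF (d : ℕ) : PowerSeries ℚ := PowerSeries.mk fun n => if d ∣ n then 1 else 0

lemma coeff_invF (d n : ℕ) : PowerSeries.coeff n (invF d) = if d ∣ n then 1 else 0 :=
  PowerSeries.coeff_mk _ _

lemma one_sub_mul_invF {d : ℕ} (hd : 0 < d) : (1 - X ^ d) * invF d = 1 := by
  ext n
  rw [sub_mul, one_mul, map_sub, PowerSeries.coeff_one, mul_comm,
    PowerSeries.coeff_mul_X_pow', coeff_invF]
  rcases Nat.eq_zero_or_pos n with rfl | hn
  · simp [Nat.not_succ_le_zero, hd.ne']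
  · rw [if_neg hn.ne']
    by_cases h1 : d ∣ n
    · have hdn : d ≤ n := Nat.le_of_dvd hn h1
      rw [if_pos h1, if_pos hdn, coeff_invF, if_pos (Nat.dvd_sub h1 dvd_rfl)]
      ring
    · rw [if_neg h1]
      by_cases h2 : d ≤ n
      · rw [if_pos h2, coeff_invF,
          if_neg fun hc => h1 ((Nat.sub_add_cancel h2) ▸ Nat.dvd_add hc dvd_rfl)]
        ring
      · rw [if_neg h2]; ring

lemma inv_prod (k : ℕ) :
    (∏ i ∈ Finset.range k, (1 - (X : PowerSeries ℚ) ^ (2*i+1)))⁻¹ =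
      ∏ i ∈ Finset.range k, invF (2*i+1) := by
  rw [PowerSeries.inv_eq_iff_mul_eq_one]
  · rw [← Finset.prod_mul_distrib]
    rw [Finset.prod_congr rfl (fun i _ => mul_comm _ _)]
    exact Finset.prod_eq_one fun i _ => one_sub_mul_invF (by omega)
  · rw [map_prod]
    apply ne_of_eq_of_ne (Finset.prod_eq_one fun i _ => ?_) one_ne_zero
    rw [map_sub, map_one, map_pow, PowerSeries.constantCoeff_X, zero_pow (by omega), sub_zero]

def Ws : ℕ → List ℕ → ℕ
  | _, [] => 0
  | s, x :: r => (2*s+1) * x + Ws (s+1) r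

def D : ℕ → ℕ → ℕ → Finset (List ℕ)
  | _, 0, n => if n = 0 then {[]} else ∅
  | s, k+1, n => (Finset.HasAntidiagonal.antidiagonal n).biUnion fun p =>
      if (2*s+1) ∣ p.2 then (D (s+1) k p.1).image (List.cons (p.2 / (2*s+1))) else ∅

lemma mem_D {s k n : ℕ} {c : List ℕ} : c ∈ D s k n ↔ c.length = k ∧ Ws s c = n := by
  induction k generalizing s n c with
  | zero =>
    rw [D]
    split_ifs with h
    · subst h
      simp only [Finset.mem_singleton]
      constructor
      · rintro rfl; exact ⟨rfl, rfl⟩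
      · rintro ⟨h1, h2⟩; exact List.length_eq_zero_iff.mp h1
    · simp only [Finset.notMem_empty, false_iff]
      rintro ⟨h1, h2⟩
      rcases List.length_eq_zero_iff.mp h1
      exact h (h2 ▸ rfl)
  | succ k ih =>
    rw [D]
    simp only [Finset.mem_biUnion, Finset.HasAntidiagonal.mem_antidiagonal, Prod.exists]
    constructor
    · rintro ⟨a, b, hab, hc⟩
      split_ifs at hc with hd
      · rcases Finset.mem_image.mp hc with ⟨t, ht, rfl⟩
        rcases ih.mp ht with ⟨hl, hw⟩
        refine ⟨by simp [hl], ?_⟩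
        simp only [Ws, hw]
        rw [Nat.mul_div_cancel' hd]
        omega
      · exact absurd hc (Finset.notMem_empty _)
    · rintro ⟨hl, hw⟩
      rcases c with _ | ⟨x, t⟩
      · simp at hl
      · refine ⟨Ws (s+1) t, (2*s+1) * x, ?_, ?_⟩
        · rw [← hw]; simp [Ws]; ring
        · rw [if_pos ⟨x, mul_comm x _ ▸ rfl⟩]
          refine Finset.mem_image.mpr ⟨t, ih.mpr ⟨by simpa using hl, rfl⟩, ?_⟩
          rw [Nat.mul_div_cancel_left x (by omega)]

lemma coeff_D (s k n : ℕ) :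
    PowerSeries.coeff n (∏ i ∈ Finset.range k, invF (2*(i+s)+1)) = (D s k n).card := by
  induction k generalizing s n with
  | zero =>
    rw [Finset.prod_range_zero, PowerSeries.coeff_one, D]
    split_ifs with h <;> simp [h]
  | succ k ih =>
    rw [Finset.prod_range_succ', PowerSeries.coeff_mul]
    have hre : ∀ i, invF (2*(i+1+s)+1) = invF (2*(i+(s+1))+1) := fun i => by ring_nf
    rw [Finset.prod_congr rfl fun i _ => hre i]
    rw [D, Finset.card_biUnion]
    · rw [Nat.cast_sum]
      refine Finset.sum_congr rfl fun p hp => ?_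
      rw [ih, show 2*(0+s)+1 = 2*s+1 from by ring, coeff_invF]
      split_ifs with hd
      · rw [mul_one, Finset.card_image_of_injective _ (List.cons_injective), ]
      · simp
    · intro p hp q hq hpq
      simp only [Finset.disjoint_left]
      intro c hcp hcq
      apply hpq
      split_ifs at hcp hcq with h1 h2
      · rcases Finset.mem_image.mp hcp with ⟨t, ht, rfl⟩
        rcases Finset.mem_image.mp hcq with ⟨u, hu, heq⟩
        have hhead : q.2 / (2*s+1) = p.2 / (2*s+1) := (List.cons_eq_cons.mp heq).1
        have htu : u = t := (List.cons_eq_cons.mp heq).2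
        have h3 : p.2 = q.2 := by
          rw [← Nat.div_mul_cancel h1, ← Nat.div_mul_cancel h2, hhead]
        have h4 : p.1 = q.1 := by
          have hp' := Finset.HasAntidiagonal.mem_antidiagonal.mp hp
          have hq' := Finset.HasAntidiagonal.mem_antidiagonal.mp hq
          omega
        exact Prod.ext h4 h3
      all_goals first
        | exact absurd hcp (Finset.notMem_empty _)
        | exact absurd hcq (Finset.notMem_empty _)


def go : ℕ → List ℕ → List (ℕ × ℕ)
  | _, [] => []
  | b, y :: t => (b + y + 1, y + 1) :: go (b + 2*y + 1) t

lemma go_length (b : ℕ) (t : List ℕ) : (go b t).length = t.length := by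
  induction t generalizing b with
  | nil => rfl
  | cons y t ih => simp [go, ih]

lemma go_snd (b : ℕ) (t : List ℕ) : (go b t).map Prod.snd = t.map (· + 1) := by
  induction t generalizing b with
  | nil => rfl
  | cons y t ih => simp [go, ih]

lemma go_bounds (b : ℕ) (t : List ℕ) : ∀ p ∈ go b t, 1 ≤ p.2 ∧ p.2 ≤ p.1 := by
  induction t generalizing b with
  | nil => simp [go]
  | cons y t ih =>
    simp only [go, List.mem_cons]
    rintro p (rfl | hp)
    · exact ⟨by omega, by omega⟩
    · exact ih _ p hp

lemma go_fst_ge (b : ℕ) (t : List ℕ) : ∀ p ∈ go b t, b + 1 ≤ p.1 := by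
  induction t generalizing b with
  | nil => simp [go]
  | cons y t ih =>
    simp only [go, List.mem_cons]
    rintro p (rfl | hp)
    · omega
    · have := ih _ p hp; omega

lemma go_sorted (b : ℕ) (t : List ℕ) : (go b t).Pairwise LexLe := by
  induction t generalizing b with
  | nil => simp [go]
  | cons y t ih =>
    rw [go, List.pairwise_cons]
    refine ⟨fun p hp => ?_, ih _⟩
    exact Or.inl (by have := go_fst_ge _ _ p hp; simp only; omega)

lemma go_chain (b : ℕ) (t : List ℕ) :
    (go b t).Chain' (fun p q => (q.1 : ℤ) - (p.1 : ℤ) - (q.2 : ℤ) - (p.2 : ℤ) = -1) := by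
  induction t generalizing b with
  | nil => exact List.isChain_nil
  | cons y t ih =>
    rcases t with _ | ⟨z, t⟩
    · exact List.isChain_singleton _
    · rw [go, go, show ∀ (R : ℕ × ℕ → ℕ × ℕ → Prop) (l : List (ℕ × ℕ)), l.Chain' R = l.IsChain R from
        fun _ _ => rfl, List.isChain_cons_cons]
      refine ⟨?_, by rw [← go] at *; exact ih _⟩
      push_cast
      ring

lemma Ws_succ (s : ℕ) (r : List ℕ) : Ws (s+1) r = Ws s r + 2 * r.sum := by
  induction r generalizing s with
  | nil => rfl
  | cons x r ih => simp only [Ws, List.sum_cons, ih (s+1), ih s]; ring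

lemma go_sum_append (b y : ℕ) (t : List ℕ) :
    ((go b (t ++ [y])).map Prod.fst).sum
      = ((go b t).map Prod.fst).sum + b + 2 * t.sum + t.length + y + 1 := by
  induction t generalizing b with
  | nil => simp [go]
  | cons z t ih =>
    rw [show (z::t) ++ [y] = z :: (t ++ [y]) from rfl, go, List.map_cons, List.sum_cons, ih,
      go, List.map_cons, List.sum_cons, List.sum_cons, List.length_cons]
    ring

lemma tri_succ (k : ℕ) : (k+1)*(k+1+1)/2 = k*(k+1)/2 + (k+1) := by
  have h1 : (k+1)*(k+1+1) = k*(k+1) + 2*(k+1) := by ring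
  have h2 : k*(k+1) % 2 = 0 := Nat.even_iff.mp (Nat.even_mul_succ_self k)
  omega

lemma go_sum_reverse (c : List ℕ) :
    ((go 0 c.reverse).map Prod.fst).sum = c.length * (c.length + 1) / 2 + Ws 0 c := by
  induction c with
  | nil => simp [go, Ws]
  | cons x c ih =>
    have hrev : (x :: c).reverse = c.reverse ++ [x] := by simp
    rw [hrev, go_sum_append, ih]
    simp only [Ws, List.length_cons, List.sum_reverse, List.length_reverse, Ws_succ]
    have := tri_succ c.length
    omega

lemma go_head (b : ℕ) (t : List ℕ) : ∀ p, (go b t).head? = some p → p.1 = b + p.2 := by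
  rcases t with _ | ⟨y, t⟩
  · simp [go]
  · intro p hp
    simp only [go, List.head?_cons, Option.some.injEq] at hp
    rw [← hp]
    omega

lemma go_eq (l : List (ℕ × ℕ)) (b : ℕ) (h1 : ∀ p ∈ l, 1 ≤ p.2)
    (h2 : ∀ p, l.head? = some p → p.1 = b + p.2)
    (h3 : l.Chain' (fun p q => (q.1 : ℤ) - (p.1 : ℤ) - (q.2 : ℤ) - (p.2 : ℤ) = -1)) :
    l = go b (l.map (fun p => p.2 - 1)) := by
  induction l generalizing b with
  | nil => rfl
  | cons x l ih =>
    have hx1 : 1 ≤ x.2 := h1 x (List.mem_cons_self)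
    have hx2 : x.1 = b + x.2 := h2 x rfl
    rw [List.map_cons, go]
    have hfst : b + (x.2 - 1) + 1 = x.1 := by omega
    have hsnd : x.2 - 1 + 1 = x.2 := by omega
    rw [hfst, hsnd, Prod.mk.eta]
    congr 1
    refine ih (b + 2 * (x.2 - 1) + 1) (fun p hp => h1 p (List.mem_cons_of_mem x hp)) ?_ h3.tail
    intro p hp
    rcases l with _ | ⟨y, l'⟩
    · simp at hp
    · simp only [List.head?_cons, Option.some.injEq] at hp
      subst hp
      have hc : (y.1 : ℤ) - (x.1 : ℤ) - (y.2 : ℤ) - (x.2 : ℤ) = -1 :=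
        (List.isChain_cons_cons.mp h3).1
      omega

def Phi (c : List ℕ) : List (ℕ × ℕ) := go 0 c.reverse

def E (v k : ℕ) : Finset (List ℕ) :=
  if k*(k+1)/2 ≤ v then D 0 k (v - k*(k+1)/2) else ∅

lemma Phi_injective : Function.Injective Phi := by
  intro c c' h
  have h1 := congrArg (List.map Prod.snd) h
  rw [Phi, Phi, go_snd, go_snd] at h1
  have h2 : c.reverse = c'.reverse :=
    List.map_injective_iff.mpr (fun a b hab => by omega) h1
  simpa using congrArg List.reverse h2

lemma Phi_length (c : List ℕ) : (Phi c).length = c.length := by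
  rw [Phi, go_length, List.length_reverse]

lemma tri_ge (k : ℕ) (hk : 1 ≤ k) : k ≤ k*(k+1)/2 := by
  rw [Nat.le_div_iff_mul_le (by norm_num)]
  exact Nat.mul_le_mul_left k (by omega)

lemma main_set (v : ℕ) (hv : 0 < v) :
    {l : List (ℕ × ℕ) | l.Pairwise LexLe ∧ (∀ p ∈ l, 1 ≤ p.2 ∧ p.2 ≤ p.1) ∧
      (∀ p : ℕ × ℕ, l.head? = some p → p.1 = p.2) ∧
      l.Chain' (fun p q => (q.1 : ℤ) - (p.1 : ℤ) - (q.2 : ℤ) - (p.2 : ℤ) = -1) ∧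
      (l.map Prod.fst).sum = v} =
    ↑((Finset.range (v+1)).biUnion fun k => (E v k).image Phi) := by
  ext l
  simp only [Set.mem_setOf_eq, Finset.coe_biUnion, Finset.coe_image, Set.mem_iUnion,
    Finset.mem_coe, Finset.mem_range, Set.mem_image, Finset.mem_coe]
  constructor
  · rintro ⟨hs, hb, hh, hc, hsum⟩
    set c : List ℕ := (l.map (fun p => p.2 - 1)).reverse with hcdef
    have hl : l = Phi c := by
      rw [Phi, hcdef, List.reverse_reverse]
      exact go_eq l 0 (fun p hp => (hb p hp).1) (fun p hp => by rw [hh p hp]; omega) hc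
    set k := c.length with hkdef
    have hsum2 : k*(k+1)/2 + Ws 0 c = v := by
      rw [← go_sum_reverse c, ← Phi, ← hl, hsum]
    have hk1 : 1 ≤ k := by
      by_contra hk0
      have : k = 0 := by omega
      rw [this] at hsum2
      simp [Ws, show c = [] from List.length_eq_zero_iff.mp this] at hsum2
      omega
    have htri : k*(k+1)/2 ≤ v := by omega
    have hkv : k < v + 1 :=
      lt_of_le_of_lt (le_trans (tri_ge k hk1) htri) (Nat.lt_succ_self v)
    refine ⟨k, hkv, c, ?_, hl.symm⟩
    rw [E, if_pos htri]
    exact mem_D.mpr ⟨rfl, by omega⟩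
  · rintro ⟨k, hk, c, hcE, rfl⟩
    rw [E] at hcE
    split_ifs at hcE with htri
    · rcases mem_D.mp hcE with ⟨hlen, hws⟩
      refine ⟨go_sorted _ _, go_bounds _ _, fun p hp => by have := go_head 0 c.reverse p hp; omega,
        go_chain _ _, ?_⟩
      rw [Phi] at *
      rw [go_sum_reverse c, hlen, hws]
      omega
    · exact absurd hcE (Finset.notMem_empty _)

lemma length_of_mem_E {v k : ℕ} {c : List ℕ} (h : c ∈ E v k) : c.length = k := by
  rw [E] at h
  split_ifs at h with htri
  · exact (mem_D.mp h).1
  · exact absurd h (Finset.notMem_empty _)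

theorem stmt16' (v : ℕ) (hv : 0 < v) :
    ({l : List (ℕ × ℕ) | l.Pairwise LexLe ∧ (∀ p ∈ l, 1 ≤ p.2 ∧ p.2 ≤ p.1) ∧
      (∀ p : ℕ × ℕ, l.head? = some p → p.1 = p.2) ∧
      l.Chain' (fun p q => (q.1 : ℤ) - (p.1 : ℤ) - (q.2 : ℤ) - (p.2 : ℤ) = -1) ∧
      (l.map Prod.fst).sum = v}.ncard : ℚ) =
    PowerSeries.coeff v (∑ n ∈ Finset.range (v + 1),
      (PowerSeries.X : PowerSeries ℚ) ^ (n * (n + 1) / 2) *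
        (∏ i ∈ Finset.range n, (1 - (PowerSeries.X : PowerSeries ℚ) ^ (2 * i + 1)))⁻¹) := by
  have hdisj : ∀ k ∈ Finset.range (v+1), ∀ k' ∈ Finset.range (v+1), k ≠ k' →
      Disjoint ((E v k).image Phi) ((E v k').image Phi) := by
    intro k _ k' _ hkk
    rw [Finset.disjoint_left]
    rintro l hl hl'
    rcases Finset.mem_image.mp hl with ⟨c, hc, rfl⟩
    rcases Finset.mem_image.mp hl' with ⟨c', hc', heq⟩
    apply hkk
    rw [← length_of_mem_E hc, ← length_of_mem_E hc', ← Phi_length, ← Phi_length, heq]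
  rw [main_set v hv, Set.ncard_coe_finset, Finset.card_biUnion hdisj, Nat.cast_sum, map_sum]
  refine Finset.sum_congr rfl fun k hk => ?_
  rw [Finset.card_image_of_injective _ Phi_injective, inv_prod, mul_comm,
    PowerSeries.coeff_mul_X_pow']
  have hc := coeff_D 0 k (v - k*(k+1)/2)
  simp only [Nat.add_zero] at hc
  rw [E]
  split_ifs with htri
  · exact hc.symm
  · simp

/-- the tenth order mock theta function
`ψ₁₀(q) = ∑_n q^{n(n+1)/2}/(q;q²)_n` generates partitions with n copies of n
with all consecutive weighted differences −1 and smallest part of the form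
`j_j`.  Since the `n`-th term has order at least `n`, the sum may be truncated
at `n = v` when extracting the coefficient of `q^v`. -/
theorem stmt16 (v : ℕ) (hv : 0 < v) :
    ({l : List (ℕ × ℕ) | l.Pairwise LexLe ∧ (∀ p ∈ l, 1 ≤ p.2 ∧ p.2 ≤ p.1) ∧
      (∀ p : ℕ × ℕ, l.head? = some p → p.1 = p.2) ∧
      l.Chain' (fun p q => (q.1 : ℤ) - (p.1 : ℤ) - (q.2 : ℤ) - (p.2 : ℤ) = -1) ∧
      (l.map Prod.fst).sum = v}.ncard : ℚ) =
    PowerSeries.coeff v (∑ n ∈ Finset.range (v + 1),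
      (PowerSeries.X : PowerSeries ℚ) ^ (n * (n + 1) / 2) *
        (∏ i ∈ Finset.range n, (1 - (PowerSeries.X : PowerSeries ℚ) ^ (2 * i + 1)))⁻¹) := stmt16' v hv
end
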